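/- Let μ > 0, suppose τ ≤ μh, and set α = 2τ/h². Then Σ_{k = ⌈3μ/h⌉}^∞ G_k(α) ≤ (1/√(6πμ/h)) (eτ/(3μh))^{3μ/h}; in particular this sum is o((e/3)^{μ/h}) as h → 0. -/

import Mathlib

open Real

/-- Modified Bessel function of the first kind of nonnegative integer order. -/
noncomputable def besselI (n : ℕ) (α : ℝ) : ℝ :=
  ∑' m : ℕ, (α/2)^(2*m+n) / (Nat.factorial m * Nat.factorial (m+n))

/-- Discrete heat kernel. -/
noncomputable def G (k : ℤ) (α : ℝ) : ℝ := Real.exp (-α) * besselI k.natAbs α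

lemma fact_mul_fact_le (a b : ℕ) :
    ((Nat.factorial a : ℝ) * Nat.factorial b) ≤ Nat.factorial (a+b) := by
  exact_mod_cast Nat.le_of_dvd (a+b).factorial_pos
    (Nat.factorial_mul_factorial_dvd_factorial_add a b)

lemma bessel_term_le (x : ℝ) (hx : 0 ≤ x) (n m : ℕ) :
    x^(2*m+n) / (Nat.factorial m * Nat.factorial (m+n))
      ≤ (x^n / Nat.factorial n) * ((x^2)^m / Nat.factorial m) := by
  have h1 : (Nat.factorial m : ℝ) * Nat.factorial n ≤ Nat.factorial m * Nat.factorial (m+n) := by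
    have h2 : (Nat.factorial n : ℝ) ≤ Nat.factorial (m+n) := by
      exact_mod_cast Nat.factorial_le (Nat.le_add_left n m)
    exact mul_le_mul_of_nonneg_left h2 (by positivity)
  calc x^(2*m+n) / (Nat.factorial m * Nat.factorial (m+n))
      ≤ x^(2*m+n) / (Nat.factorial m * Nat.factorial n) := by gcongr
    _ = (x^n / Nat.factorial n) * ((x^2)^m / Nat.factorial m) := by
        rw [← pow_mul, pow_add, div_mul_div_comm]
        ring_nf

lemma summable_bessel (x : ℝ) (hx : 0 ≤ x) (n : ℕ) :
    Summable (fun m : ℕ => x^(2*m+n) / (Nat.factorial m * Nat.factorial (m+n))) := by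
  refine Summable.of_nonneg_of_le (fun m => by positivity) (fun m => bessel_term_le x hx n m) ?_
  exact (Real.summable_pow_div_factorial (x^2)).mul_left _

lemma exp_tsum_ennreal (x : ℝ) (hx : 0 ≤ x) :
    ∑' n : ℕ, ENNReal.ofReal (x^n / Nat.factorial n) = ENNReal.ofReal (Real.exp x) := by
  rw [← ENNReal.ofReal_tsum_of_nonneg (fun n => by positivity)
    (Real.summable_pow_div_factorial x)]
  congr 1
  rw [Real.exp_eq_exp_ℝ]
  exact (NormedSpace.expSeries_div_hasSum_exp x).tsum_eq

lemma tail_exp_ennreal (x : ℝ) (hx : 0 ≤ x) (K : ℕ) :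
    ∑' j : ℕ, ENNReal.ofReal (x^(K+j) / Nat.factorial (K+j))
      ≤ ENNReal.ofReal (x^K / Nat.factorial K) * ENNReal.ofReal (Real.exp x) := by
  calc ∑' j : ℕ, ENNReal.ofReal (x^(K+j) / Nat.factorial (K+j))
      ≤ ∑' j : ℕ, ENNReal.ofReal ((x^K / Nat.factorial K) * (x^j / Nat.factorial j)) := by
        refine ENNReal.tsum_le_tsum (fun j => ENNReal.ofReal_le_ofReal ?_)
        calc x^(K+j) / (Nat.factorial (K+j) : ℝ)
            ≤ x^(K+j) / ((Nat.factorial K : ℝ) * Nat.factorial j) := by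
              gcongr
              exact fact_mul_fact_le K j
          _ = (x^K / Nat.factorial K) * (x^j / Nat.factorial j) := by
              rw [pow_add, div_mul_div_comm]
    _ = ENNReal.ofReal (x^K / Nat.factorial K) * ENNReal.ofReal (Real.exp x) := by
        simp_rw [ENNReal.ofReal_mul (show (0:ℝ) ≤ x^K / Nat.factorial K by positivity)]
        rw [ENNReal.tsum_mul_left, exp_tsum_ennreal x hx]

lemma tail_le (x : ℝ) (hx : 0 ≤ x) (K : ℕ) :
    ∑' j : ℕ, G ((K : ℤ) + j) (2*x) ≤ x^K / Nat.factorial K := by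
  have hrhs : (0:ℝ) ≤ x^K / Nat.factorial K := by positivity
  have hGval : ∀ j : ℕ, G ((K:ℤ) + j) (2*x)
      = Real.exp (-(2*x)) * ∑' m : ℕ,
          x^(2*m+(K+j)) / (Nat.factorial m * Nat.factorial (m+(K+j))) := by
    intro j
    have h1 : ((K:ℤ) + j).natAbs = K + j := by
      rw [← Nat.cast_add]; exact Int.natAbs_natCast _
    have h2 : (2*x)/2 = x := by ring
    rw [G, h1, besselI, h2]
  have hG0 : ∀ j : ℕ, 0 ≤ G ((K:ℤ)+j) (2*x) := by
    intro j
    rw [hGval j]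
    exact mul_nonneg (Real.exp_nonneg _) (tsum_nonneg fun m => by positivity)
  by_cases hs : Summable (fun j : ℕ => G ((K:ℤ)+j) (2*x))
  swap
  · rw [tsum_eq_zero_of_not_summable hs]; exact hrhs
  have key : ENNReal.ofReal (∑' j : ℕ, G ((K:ℤ)+j) (2*x))
      ≤ ENNReal.ofReal (x^K / Nat.factorial K) := by
    rw [ENNReal.ofReal_tsum_of_nonneg hG0 hs]
    have step1 : ∀ j : ℕ, ENNReal.ofReal (G ((K:ℤ)+j) (2*x))
        = ENNReal.ofReal (Real.exp (-(2*x))) *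
          ∑' m : ℕ, ENNReal.ofReal
            (x^(2*m+(K+j)) / (Nat.factorial m * Nat.factorial (m+(K+j)))) := by
      intro j
      rw [hGval j, ENNReal.ofReal_mul (Real.exp_nonneg _),
        ENNReal.ofReal_tsum_of_nonneg (fun m => by positivity) (summable_bessel x hx (K+j))]
    calc ∑' j : ℕ, ENNReal.ofReal (G ((K:ℤ)+j) (2*x))
        = ENNReal.ofReal (Real.exp (-(2*x))) * ∑' (j : ℕ) (m : ℕ), ENNReal.ofReal
            (x^(2*m+(K+j)) / (Nat.factorial m * Nat.factorial (m+(K+j)))) := by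
          simp_rw [step1]; rw [ENNReal.tsum_mul_left]
      _ = ENNReal.ofReal (Real.exp (-(2*x))) * ∑' (m : ℕ) (j : ℕ), ENNReal.ofReal
            (x^(2*m+(K+j)) / (Nat.factorial m * Nat.factorial (m+(K+j)))) := by
          rw [ENNReal.tsum_comm]
      _ ≤ ENNReal.ofReal (Real.exp (-(2*x))) * ∑' (m : ℕ),
            (ENNReal.ofReal (x^m / Nat.factorial m) *
              (ENNReal.ofReal (x^K / Nat.factorial K) * ENNReal.ofReal (Real.exp x))) := by
          refine mul_le_mul_right (ENNReal.tsum_le_tsum fun m => ?_) _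
          have hterm : ∀ j : ℕ, x^(2*m+(K+j)) / ((Nat.factorial m : ℝ) * Nat.factorial (m+(K+j)))
              = (x^m / Nat.factorial m) * (x^(K+(m+j)) / Nat.factorial (K+(m+j))) := by
            intro j
            rw [show m+(K+j) = K+(m+j) by omega, show 2*m+(K+j) = m + (K+(m+j)) by omega,
              pow_add, div_mul_div_comm]
          calc ∑' j : ℕ, ENNReal.ofReal
                (x^(2*m+(K+j)) / (Nat.factorial m * Nat.factorial (m+(K+j))))
              = ENNReal.ofReal (x^m / Nat.factorial m) *
                  ∑' j : ℕ, ENNReal.ofReal (x^(K+(m+j)) / Nat.factorial (K+(m+j))) := by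
                simp_rw [hterm, ENNReal.ofReal_mul (show (0:ℝ) ≤ x^m / Nat.factorial m by positivity)]
                rw [ENNReal.tsum_mul_left]
            _ ≤ ENNReal.ofReal (x^m / Nat.factorial m) *
                  ∑' j : ℕ, ENNReal.ofReal (x^(K+j) / Nat.factorial (K+j)) := by
                refine mul_le_mul_right ?_ _
                exact ENNReal.tsum_comp_le_tsum_of_injective (add_right_injective m)
                  (fun j => ENNReal.ofReal (x^(K+j) / Nat.factorial (K+j)))
            _ ≤ ENNReal.ofReal (x^m / Nat.factorial m) *
                  (ENNReal.ofReal (x^K / Nat.factorial K) * ENNReal.ofReal (Real.exp x)) :=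
                mul_le_mul_right (tail_exp_ennreal x hx K) _
      _ = ENNReal.ofReal (Real.exp (-(2*x))) * (ENNReal.ofReal (Real.exp x) *
            (ENNReal.ofReal (x^K / Nat.factorial K) * ENNReal.ofReal (Real.exp x))) := by
          rw [ENNReal.tsum_mul_right, exp_tsum_ennreal x hx]
      _ = ENNReal.ofReal (x^K / Nat.factorial K) := by
          rw [← ENNReal.ofReal_mul (show (0:ℝ) ≤ x^K / Nat.factorial K by positivity),
            ← ENNReal.ofReal_mul (Real.exp_nonneg _),
            ← ENNReal.ofReal_mul (Real.exp_nonneg _)]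
          congr 1
          rw [show Real.exp (-(2*x)) * (Real.exp x * (x^K / Nat.factorial K * Real.exp x))
              = (Real.exp (-(2*x)) * Real.exp x * Real.exp x) * (x^K / Nat.factorial K) by ring,
            ← Real.exp_add, ← Real.exp_add, show -(2*x)+x+x = 0 by ring, Real.exp_zero, one_mul]
  exact (ENNReal.ofReal_le_ofReal_iff hrhs).mp key

lemma stirling_lower (K : ℕ) (hK : 1 ≤ K) :
    Real.sqrt (2*π*K) * ((K:ℝ)/Real.exp 1)^K ≤ (Nat.factorial K : ℝ) := by
  have hKpos : (0:ℝ) < K := by exact_mod_cast hK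
  have h1 : Real.sqrt π ≤ Stirling.stirlingSeq K := by
    have h2 := Stirling.stirlingSeq'_antitone.le_of_tendsto
      (Stirling.tendsto_stirlingSeq_sqrt_pi.comp (Filter.tendsto_add_atTop_nat 1)) (K-1)
    simpa [Function.comp, Nat.sub_add_cancel hK] using h2
  have hden : 0 < Real.sqrt (2*K) * ((K:ℝ)/Real.exp 1)^K := by positivity
  rw [Stirling.stirlingSeq, le_div_iff₀ hden] at h1
  calc Real.sqrt (2*π*K) * ((K:ℝ)/Real.exp 1)^K
      = Real.sqrt π * (Real.sqrt (2*K) * ((K:ℝ)/Real.exp 1)^K) := by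
        rw [show 2*π*(K:ℝ) = π * (2*K) by ring, Real.sqrt_mul Real.pi_nonneg]
        ring
    _ ≤ (Nat.factorial K : ℝ) := h1

/-- Tail estimate for the discrete heat kernel when `τ ≤ μ h`. -/
theorem discrete_heat_kernel_tail_bound (μ h τ : ℝ) (hμ : 0 < μ) (hh : 0 < h)
    (hτ : 0 < τ) (hτμ : τ ≤ μ * h) :
    ∑' j : ℕ, G (⌈3*μ/h⌉₊ + j : ℤ) (2*τ/h^2)
      ≤ (1 / Real.sqrt (6 * Real.pi * μ / h)) *
        (Real.exp 1 * τ / (3 * μ * h)) ^ (3*μ/h : ℝ) := by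
  set K := ⌈3*μ/h⌉₊ with hKdef
  set x := τ/h^2 with hxdef
  have hx : (0:ℝ) < x := by positivity
  have step1 : ∑' j : ℕ, G ((K:ℤ) + j) (2*τ/h^2) ≤ x^K / Nat.factorial K := by
    rw [show 2*τ/h^2 = 2*x by rw [hxdef]; ring]
    exact tail_le x hx.le K
  refine step1.trans ?_
  have hKc : 3*μ/h ≤ (K:ℝ) := Nat.le_ceil _
  have hK1 : 1 ≤ K := Nat.ceil_pos.mpr (by positivity)
  have hKpos : (0:ℝ) < K := by exact_mod_cast hK1
  have hstir := stirling_lower K hK1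
  have hdpos : 0 < Real.sqrt (2*π*K) * ((K:ℝ)/Real.exp 1)^K := by positivity
  have hr0 : 0 < Real.exp 1 * τ / (3*μ*h) := by positivity
  have hr1 : Real.exp 1 * τ / (3*μ*h) ≤ 1 := by
    rw [div_le_one (by positivity)]
    have he3 : Real.exp 1 ≤ 3 := by
      have := Real.exp_one_lt_d9
      linarith
    calc Real.exp 1 * τ ≤ Real.exp 1 * (μ*h) := by
          exact mul_le_mul_of_nonneg_left hτμ (Real.exp_nonneg _)
      _ ≤ 3 * (μ*h) := by
          exact mul_le_mul_of_nonneg_right he3 (by positivity)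
      _ = 3*μ*h := by ring
  calc x^K / (Nat.factorial K : ℝ)
      ≤ x^K / (Real.sqrt (2*π*K) * ((K:ℝ)/Real.exp 1)^K) := by gcongr
    _ = (1 / Real.sqrt (2*π*K)) * (Real.exp 1 * x / K)^K := by
        have hK0 : (K:ℝ) ≠ 0 := hKpos.ne'
        have he0 : Real.exp 1 ≠ 0 := (Real.exp_pos 1).ne'
        conv_rhs => rw [show Real.exp 1 * x / (K:ℝ) = x / ((K:ℝ)/Real.exp 1) by
            field_simp, div_pow, div_mul_div_comm, one_mul]
    _ ≤ (1 / Real.sqrt (6*π*μ/h)) * (Real.exp 1 * τ / (3*μ*h)) ^ (3*μ/h : ℝ) := by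
        have hsq : Real.sqrt (6*π*μ/h) ≤ Real.sqrt (2*π*K) := by
          apply Real.sqrt_le_sqrt
          calc 6*π*μ/h = 2*π*(3*μ/h) := by ring
            _ ≤ 2*π*K := by
                exact mul_le_mul_of_nonneg_left hKc (by positivity)
        have h1d : 1 / Real.sqrt (2*π*K) ≤ 1 / Real.sqrt (6*π*μ/h) := by
          apply one_div_le_one_div_of_le
          · positivity
          · exact hsq
        have hbase : Real.exp 1 * x / K ≤ Real.exp 1 * τ / (3*μ*h) := by
          rw [div_le_div_iff₀ (by positivity) (by positivity)]
          calc Real.exp 1 * x * (3*μ*h) = (Real.exp 1 * τ) * (3*μ/h) := by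
                rw [hxdef]; field_simp
            _ ≤ (Real.exp 1 * τ) * K := by
                exact mul_le_mul_of_nonneg_left hKc (by positivity)
        have hpow : (Real.exp 1 * x / K)^K ≤ (Real.exp 1 * τ / (3*μ*h)) ^ (3*μ/h : ℝ) := by
          calc (Real.exp 1 * x / K)^K ≤ (Real.exp 1 * τ / (3*μ*h))^K :=
                pow_le_pow_left₀ (by positivity) hbase K
            _ = (Real.exp 1 * τ / (3*μ*h)) ^ ((K:ℕ):ℝ) := (Real.rpow_natCast _ K).symm
            _ ≤ (Real.exp 1 * τ / (3*μ*h)) ^ (3*μ/h : ℝ) :=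
                Real.rpow_le_rpow_of_exponent_ge hr0 hr1 hKc
        exact mul_le_mul h1d hpow (by positivity) (by positivity)
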